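/- arXiv:2111.01893 — 2 statements merged into one kernel-verified Lean document; each statement's English description precedes it below -/
import Mathlib

section
/- Let p be an odd prime and m ≥ 1. The group GL₂(ℤ_p) decomposes as a disjoint union of double cosets B(ℤ_p)·γ_{i,a}·K_p(m), where the representatives are: γ_{0,a} = [[0,-1],[1,a]] for a ranging over ℤ_p/p^mℤ_p; γ_{i,a} = [[1,0],[a p^i,1]] for 1 ≤ i ≤ m−1 and a ranging over (ℤ_p/p^{m−i}ℤ_p)^×; and γ_{m,0} = identity. -/
open scoped Matrix

namespace Stmt1

variable (p : ℕ) [Fact p.Prime]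

/-- The upper-triangular Borel subgroup of `GL₂(ℤ_p)`, viewed at the level of matrices:
invertible matrices with vanishing lower-left entry. -/
def Borel : Set (Matrix (Fin 2) (Fin 2) ℤ_[p]) :=
  {b | IsUnit b.det ∧ b 1 0 = 0}

/-- The principal congruence subgroup `K_p(m) = 1 + p^m M₂(ℤ_p)`, at the level of matrices. -/
def Kcong (m : ℕ) : Set (Matrix (Fin 2) (Fin 2) ℤ_[p]) :=
  {k | ∃ A : Matrix (Fin 2) (Fin 2) ℤ_[p], k = 1 + (p : ℤ_[p]) ^ m • A}

/-- `g` and `h` lie in the same double coset `B(ℤ_p) h K_p(m)`. -/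
def DosetRel (m : ℕ) (g h : Matrix (Fin 2) (Fin 2) ℤ_[p]) : Prop :=
  ∃ b ∈ Borel p, ∃ k ∈ Kcong p m, g = b * h * k

/-- The double coset representatives `γ_{i,a}`. -/
noncomputable def γ (m i : ℕ) (a : ℤ_[p]) : Matrix (Fin 2) (Fin 2) ℤ_[p] :=
  if i = 0 then !![0, -1; 1, a] else if i = m then 1 else !![1, 0; a * (p : ℤ_[p]) ^ i, 1]

/-! ### Auxiliary lemmas -/

lemma pm_mul_norm_le (m : ℕ) (z : ℤ_[p]) :
    ‖(p : ℤ_[p]) ^ m * z‖ ≤ (p : ℝ) ^ (-(m : ℤ)) := by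
  rw [norm_mul, ← PadicInt.norm_p_pow]
  exact mul_le_of_le_one_right (norm_nonneg _) (PadicInt.norm_le_one z)

lemma norm_sub_le_max' (x y : ℤ_[p]) : ‖x - y‖ ≤ max ‖x‖ ‖y‖ := by
  have := PadicInt.nonarchimedean x (-y)
  simpa [sub_eq_add_neg] using this

/-- Extract the bottom-row relation from a double coset relation. -/
lemma bottom_row_rel {m : ℕ} {g h : Matrix (Fin 2) (Fin 2) ℤ_[p]}
    (hrel : DosetRel p m g h) :
    ∃ u : ℤ_[p], IsUnit u ∧ ‖g 1 0 - u * h 1 0‖ ≤ (p : ℝ) ^ (-(m : ℤ)) ∧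
      ‖g 1 1 - u * h 1 1‖ ≤ (p : ℝ) ^ (-(m : ℤ)) := by
  obtain ⟨b, ⟨hbdet, hb10⟩, k, ⟨A, hA⟩, hg⟩ := hrel
  have hu : IsUnit (b 1 1) := by
    have hdet : b.det = b 0 0 * b 1 1 := by
      rw [Matrix.det_fin_two, hb10]; ring
    exact isUnit_of_mul_isUnit_right (hdet ▸ hbdet)
  have k00 : k 0 0 = 1 + (p : ℤ_[p]) ^ m * A 0 0 := by rw [hA]; simp [Matrix.one_apply]
  have k10 : k 1 0 = (p : ℤ_[p]) ^ m * A 1 0 := by rw [hA]; simp [Matrix.one_apply]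
  have k01 : k 0 1 = (p : ℤ_[p]) ^ m * A 0 1 := by rw [hA]; simp [Matrix.one_apply]
  have k11 : k 1 1 = 1 + (p : ℤ_[p]) ^ m * A 1 1 := by rw [hA]; simp [Matrix.one_apply]
  have key : ∀ jj, g 1 jj = b 1 1 * (h 1 0 * k 0 jj + h 1 1 * k 1 jj) := by
    intro jj
    rw [hg]
    simp only [Matrix.mul_apply, Fin.sum_univ_two, hb10]
    ring
  refine ⟨b 1 1, hu, ?_, ?_⟩
  · have e : g 1 0 - b 1 1 * h 1 0 =
        (p : ℤ_[p]) ^ m * (b 1 1 * (h 1 0 * A 0 0 + h 1 1 * A 1 0)) := by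
      rw [key 0, k00, k10]; ring
    rw [e]; exact pm_mul_norm_le p m _
  · have e : g 1 1 - b 1 1 * h 1 1 =
        (p : ℤ_[p]) ^ m * (b 1 1 * (h 1 0 * A 0 1 + h 1 1 * A 1 1)) := by
      rw [key 1, k01, k11]; ring
    rw [e]; exact pm_mul_norm_le p m _

/-- For `p` an odd prime and `m ≥ 1`, `GL₂(ℤ_p)` is the disjoint union of the
double cosets `B(ℤ_p) γ_{i,a} K_p(m)` with `γ_{0,a} = [[0,-1],[1,a]]`, `a ∈ ℤ_p/p^mℤ_p`;
`γ_{i,a} = [[1,0],[a p^i,1]]` for `1 ≤ i ≤ m-1`, `a ∈ (ℤ_p/p^{m-i}ℤ_p)ˣ`; and `γ_{m,0} = 1`. -/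
theorem doset_decomposition (hodd : p ≠ 2) (m : ℕ) (hm : 1 ≤ m) :
    (∀ g : Matrix (Fin 2) (Fin 2) ℤ_[p], IsUnit g.det →
      ∃ i ≤ m, ∃ a : ℤ_[p],
        (i = m → a = 0) ∧ (1 ≤ i → i < m → IsUnit a) ∧
        DosetRel p m g (γ p m i a)) ∧
    (∀ i ≤ m, ∀ j ≤ m, ∀ a b : ℤ_[p],
      (i = m → a = 0) → (1 ≤ i → i < m → IsUnit a) →
      (j = m → b = 0) → (1 ≤ j → j < m → IsUnit b) →
      DosetRel p m (γ p m i a) (γ p m j b) →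
      i = j ∧ ‖a - b‖ ≤ (p : ℝ) ^ (-((m : ℤ) - (i : ℤ)))) := by
  have hp1 : (1 : ℝ) < p := by exact_mod_cast (Fact.out : p.Prime).one_lt
  have hm0 : m ≠ 0 := by omega
  have hε1 : (p : ℝ) ^ (-(m : ℤ)) < 1 := by
    rw [← PadicInt.norm_p_pow]
    exact (PadicInt.norm_lt_one_iff_dvd _).mpr (dvd_pow_self _ hm0)
  constructor
  · -- Existence
    intro g hg
    set c := g 1 0 with hc
    set d := g 1 1 with hd
    by_cases hcu : IsUnit c
    · -- i = 0
      obtain ⟨u, hu⟩ := hcu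
      set a : ℤ_[p] := d * ↑u⁻¹ with ha
      refine ⟨0, Nat.zero_le m, a, fun h => absurd h.symm hm0, fun h => absurd h (by omega), ?_⟩
      have hγ : γ p m 0 a = !![0, -1; 1, a] := by simp [γ]
      have hca : c * ↑u⁻¹ = 1 := by rw [← hu]; exact u.mul_inv
      refine ⟨g * !![a, 1; -1, 0], ⟨?_, ?_⟩, 1, ⟨0, by simp⟩, ?_⟩
      · rw [Matrix.det_mul, Matrix.det_fin_two_of]
        simpa using hg
      · simp only [Matrix.mul_apply, Fin.sum_univ_two]
        show c * a + d * (-1) = 0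
        rw [ha]
        calc c * (d * ↑u⁻¹) + d * (-1) = d * (c * ↑u⁻¹) - d := by ring
        _ = 0 := by rw [hca]; ring
      · rw [hγ, mul_one, mul_assoc]
        have : !![a, 1; -1, 0] * !![0, -1; 1, a] = 1 := by
          ext i j
          fin_cases i <;> fin_cases j <;>
            simp [Matrix.mul_apply, Fin.sum_univ_two, Matrix.one_apply]
        rw [this, mul_one]
    · -- bottom-right entry is a unit
      have hdu : IsUnit d := by
        rw [PadicInt.isUnit_iff]
        by_contra hdn
        have hdn' : ‖d‖ < 1 := lt_of_le_of_ne (PadicInt.norm_le_one d) hdn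
        have hcn' : ‖c‖ < 1 := PadicInt.not_isUnit_iff.mp hcu
        have : ‖g.det‖ < 1 := by
          rw [Matrix.det_fin_two]
          refine lt_of_le_of_lt (norm_sub_le_max' p _ _) (max_lt ?_ ?_)
          · rw [norm_mul]
            exact lt_of_le_of_lt (mul_le_of_le_one_left (norm_nonneg _)
              (PadicInt.norm_le_one _)) hdn'
          · rw [norm_mul]
            exact lt_of_le_of_lt (mul_le_of_le_one_left (norm_nonneg _)
              (PadicInt.norm_le_one _)) hcn'
        rw [PadicInt.isUnit_iff.mp hg] at this
        exact absurd this (by norm_num)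
      obtain ⟨u, hu⟩ := hdu
      set x : ℤ_[p] := c * ↑u⁻¹ with hx
      have hdx : d * x = c := by
        rw [hx]
        calc d * (c * ↑u⁻¹) = c * (d * ↑u⁻¹) := by ring
        _ = c := by rw [← hu, u.mul_inv, mul_one]
      have hlow : (g * !![1, 0; -x, 1]) 1 0 = 0 := by
        simp only [Matrix.mul_apply, Fin.sum_univ_two]
        show c * 1 + d * (-x) = 0
        rw [← hdx]; ring
      have hNdet : IsUnit (g * !![1, 0; -x, 1]).det := by
        rw [Matrix.det_mul, Matrix.det_fin_two_of]
        simpa using hg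
      by_cases hxm : ‖x‖ ≤ (p : ℝ) ^ (-(m : ℤ))
      · -- i = m
        obtain ⟨y, hy⟩ : (p : ℤ_[p]) ^ m ∣ x := by
          have := (PadicInt.norm_le_pow_iff_mem_span_pow x m).mp hxm
          rwa [Ideal.mem_span_singleton] at this
        refine ⟨m, le_refl m, 0, fun _ => rfl, fun _ h2 => absurd h2 (lt_irrefl m), ?_⟩
        have hγ : γ p m m 0 = 1 := by simp [γ, hm0]
        refine ⟨g * !![1, 0; -x, 1], ⟨hNdet, hlow⟩, !![1, 0; x, 1], ⟨!![0, 0; y, 0], ?_⟩, ?_⟩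
        · ext i j
          fin_cases i <;> fin_cases j <;>
            simp [Matrix.one_apply, hy, mul_comm]
        · rw [hγ, mul_one, mul_assoc]
          have : !![1, 0; -x, 1] * !![1, 0; x, 1] = 1 := by
            ext i j
            fin_cases i <;> fin_cases j <;>
              simp [Matrix.mul_apply, Fin.sum_univ_two, Matrix.one_apply]
          rw [this, mul_one]
      · -- 1 ≤ i < m
        have hx0 : x ≠ 0 := by
          intro h
          rw [h, norm_zero] at hxm
          exact hxm (le_of_lt (by positivity))
        set i : ℕ := x.valuation with hi
        set a : ℤ_[p]ˣ := PadicInt.unitCoeff hx0 with ha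
        have hspec : x = (a : ℤ_[p]) * (p : ℤ_[p]) ^ i := PadicInt.unitCoeff_spec hx0
        have hnx : ‖x‖ = (p : ℝ) ^ (-(i : ℤ)) := by
          rw [hspec, norm_mul, PadicInt.norm_units, one_mul, PadicInt.norm_p_pow]
        have him : i < m := by
          by_contra hcon
          exact hxm (hnx ▸ zpow_le_zpow_right₀ hp1.le (by omega))
        have hi1 : 1 ≤ i := by
          rcases Nat.eq_zero_or_pos i with h0 | h
          · exfalso
            apply hcu
            have : IsUnit x := by
              rw [PadicInt.isUnit_iff, hnx, h0]
              norm_num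
            rw [← hdx]
            exact (IsUnit.mul ⟨u, hu⟩ this)
          · exact h
        refine ⟨i, le_of_lt him, (a : ℤ_[p]), fun h => absurd h (by omega),
          fun _ _ => a.isUnit, ?_⟩
        have hγ : γ p m i (a : ℤ_[p]) = !![1, 0; x, 1] := by
          rw [γ, if_neg (by omega), if_neg (by omega), ← hspec]
        refine ⟨g * !![1, 0; -x, 1], ⟨hNdet, hlow⟩, 1, ⟨0, by simp⟩, ?_⟩
        rw [hγ, mul_one, mul_assoc]
        have : !![1, 0; -x, 1] * !![1, 0; x, 1] = 1 := by
          ext i j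
          fin_cases i <;> fin_cases j <;>
            simp [Matrix.mul_apply, Fin.sum_univ_two, Matrix.one_apply]
        rw [this, mul_one]
  · -- Disjointness
    intro i hi j hj a b him hiu hjm hju hrel
    obtain ⟨u, hu, h10, h11⟩ := bottom_row_rel p hrel
    have hun : ‖u‖ = 1 := PadicInt.isUnit_iff.mp hu
    -- entries of the representatives
    have entry10 : ∀ l ≤ m, ∀ x : ℤ_[p], l ≠ 0 → (l = m → x = 0) →
        γ p m l x 1 0 = x * (p : ℤ_[p]) ^ l := by
      intro l hl x hl0 hlm
      rcases eq_or_ne l m with h | h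
      · subst h
        rw [hlm rfl, zero_mul, γ, if_neg hl0, if_pos rfl]
        simp [Matrix.one_apply]
      · rw [γ, if_neg hl0, if_neg h]
        simp
    have entry11 : ∀ l ≤ m, ∀ x : ℤ_[p], l ≠ 0 → γ p m l x 1 1 = 1 := by
      intro l hl x hl0
      rcases eq_or_ne l m with h | h
      · subst h
        rw [γ, if_neg hl0, if_pos rfl]
        simp [Matrix.one_apply]
      · rw [γ, if_neg hl0, if_neg h]
        simp
    have entry010 : ∀ x : ℤ_[p], γ p m 0 x 1 0 = 1 := by intro x; simp [γ]
    have entry011 : ∀ x : ℤ_[p], γ p m 0 x 1 1 = x := by intro x; simp [γ]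
    rcases eq_or_ne i 0 with hi0 | hi0 <;> rcases eq_or_ne j 0 with hj0 | hj0
    · -- i = 0, j = 0
      subst hi0; subst hj0
      rw [entry010 a, entry010 b] at h10
      rw [entry011 a, entry011 b] at h11
      refine ⟨rfl, ?_⟩
      have key : a - b = (a - u * b) + (u - 1) * b := by ring
      have h2 : ‖(u - 1) * b‖ ≤ (p : ℝ) ^ (-(m : ℤ)) := by
        rw [norm_mul]
        refine le_trans (mul_le_of_le_one_right (norm_nonneg _) (PadicInt.norm_le_one b)) ?_
        calc ‖u - 1‖ = ‖1 - u * 1‖ := by rw [← norm_neg]; congr 1; ring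
        _ ≤ _ := h10
      have : ‖a - b‖ ≤ (p : ℝ) ^ (-(m : ℤ)) := by
        rw [key]
        refine le_trans (PadicInt.nonarchimedean _ _) (max_le h11 h2)
      simpa using this
    · -- i = 0, j ≠ 0 : contradiction
      exfalso
      subst hi0
      rw [entry010 a, entry10 j hj b hj0 hjm] at h10
      have hz : ‖u * (b * (p : ℤ_[p]) ^ j)‖ < 1 :=
        (PadicInt.norm_lt_one_iff_dvd _).mpr
          (Dvd.dvd.mul_left (Dvd.dvd.mul_left (dvd_pow_self _ hj0) b) u)
      have h1 : (1 : ℝ) ≤ max ‖(1 : ℤ_[p]) - u * (b * (p : ℤ_[p]) ^ j)‖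
          ‖u * (b * (p : ℤ_[p]) ^ j)‖ := by
        have := PadicInt.nonarchimedean ((1 : ℤ_[p]) - u * (b * (p : ℤ_[p]) ^ j))
          (u * (b * (p : ℤ_[p]) ^ j))
        simpa using this
      have := lt_of_le_of_lt h1 (max_lt (lt_of_le_of_lt h10 hε1) hz)
      exact absurd this (lt_irrefl _)
    · -- i ≠ 0, j = 0 : contradiction
      exfalso
      subst hj0
      rw [entry10 i hi a hi0 him, entry010 b] at h10
      have hz : ‖a * (p : ℤ_[p]) ^ i‖ < 1 :=
        (PadicInt.norm_lt_one_iff_dvd _).mpr (Dvd.dvd.mul_left (dvd_pow_self _ hi0) a)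
      have h1 : (1 : ℝ) ≤ max ‖a * (p : ℤ_[p]) ^ i‖ ‖a * (p : ℤ_[p]) ^ i - u * 1‖ := by
        rw [← hun]
        calc ‖u‖ = ‖-(a * (p : ℤ_[p]) ^ i - u * 1) + a * (p : ℤ_[p]) ^ i‖ := by congr 1; ring
        _ ≤ max ‖-(a * (p : ℤ_[p]) ^ i - u * 1)‖ ‖a * (p : ℤ_[p]) ^ i‖ :=
            PadicInt.nonarchimedean _ _
        _ = max ‖a * (p : ℤ_[p]) ^ i‖ ‖a * (p : ℤ_[p]) ^ i - u * 1‖ := by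
            rw [norm_neg, max_comm]
      have := lt_of_le_of_lt h1 (max_lt hz (lt_of_le_of_lt h10 hε1))
      exact absurd this (lt_irrefl _)
    · -- i ≠ 0, j ≠ 0
      rw [entry10 i hi a hi0 him, entry10 j hj b hj0 hjm] at h10
      rw [entry11 i hi a hi0, entry11 j hj b hj0] at h11
      rcases eq_or_ne i m with him' | him' <;> rcases eq_or_ne j m with hjm' | hjm'
      · -- i = m = j
        refine ⟨him'.trans hjm'.symm, ?_⟩
        rw [him him', hjm hjm', sub_zero, norm_zero]
        positivity
      · -- i = m, j < m : contradiction
        exfalso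
        have hbu : ‖b‖ = 1 := PadicInt.isUnit_iff.mp (hju (by omega) (by omega))
        rw [him him', zero_mul, zero_sub, norm_neg, norm_mul, norm_mul,
          hun, hbu, PadicInt.norm_p_pow, one_mul, one_mul] at h10
        exact absurd h10 (not_le.mpr (zpow_lt_zpow_right₀ hp1 (by omega)))
      · -- i < m, j = m : contradiction
        exfalso
        have hau : ‖a‖ = 1 := PadicInt.isUnit_iff.mp (hiu (by omega) (by omega))
        rw [hjm hjm', zero_mul, mul_zero, sub_zero, norm_mul, hau,
          PadicInt.norm_p_pow, one_mul] at h10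
        exact absurd h10 (not_le.mpr (zpow_lt_zpow_right₀ hp1 (by omega)))
      · -- 1 ≤ i, j < m
        have hau : ‖a‖ = 1 := PadicInt.isUnit_iff.mp (hiu (by omega) (by omega))
        have hbu : ‖b‖ = 1 := PadicInt.isUnit_iff.mp (hju (by omega) (by omega))
        have hna : ‖a * (p : ℤ_[p]) ^ i‖ = (p : ℝ) ^ (-(i : ℤ)) := by
          rw [norm_mul, hau, PadicInt.norm_p_pow, one_mul]
        have hnb : ‖u * (b * (p : ℤ_[p]) ^ j)‖ = (p : ℝ) ^ (-(j : ℤ)) := by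
          rw [norm_mul, norm_mul, hun, hbu, PadicInt.norm_p_pow,
            one_mul, one_mul]
        have hij : i = j := by
          by_contra hne
          rcases Nat.lt_or_ge i j with hlt | hge
          · -- i < j : ‖a p^i‖ strictly biggest
            have h1 : (p : ℝ) ^ (-(i : ℤ)) ≤
                max ‖a * (p : ℤ_[p]) ^ i - u * (b * (p : ℤ_[p]) ^ j)‖
                  ‖u * (b * (p : ℤ_[p]) ^ j)‖ := by
              rw [← hna]
              calc ‖a * (p : ℤ_[p]) ^ i‖
                  = ‖(a * (p : ℤ_[p]) ^ i - u * (b * (p : ℤ_[p]) ^ j))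
                      + u * (b * (p : ℤ_[p]) ^ j)‖ := by congr 1; ring
                _ ≤ _ := PadicInt.nonarchimedean _ _
            have h2 : max ‖a * (p : ℤ_[p]) ^ i - u * (b * (p : ℤ_[p]) ^ j)‖
                ‖u * (b * (p : ℤ_[p]) ^ j)‖ < (p : ℝ) ^ (-(i : ℤ)) := by
              refine max_lt (lt_of_le_of_lt h10 ?_) ?_
              · exact zpow_lt_zpow_right₀ hp1 (by omega)
              · rw [hnb]; exact zpow_lt_zpow_right₀ hp1 (by omega)
            exact absurd (lt_of_le_of_lt h1 h2) (lt_irrefl _)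
          · have hgt : j < i := by omega
            have h1 : (p : ℝ) ^ (-(j : ℤ)) ≤
                max ‖a * (p : ℤ_[p]) ^ i - u * (b * (p : ℤ_[p]) ^ j)‖
                  ‖a * (p : ℤ_[p]) ^ i‖ := by
              rw [← hnb]
              calc ‖u * (b * (p : ℤ_[p]) ^ j)‖
                  = ‖-(a * (p : ℤ_[p]) ^ i - u * (b * (p : ℤ_[p]) ^ j))
                      + a * (p : ℤ_[p]) ^ i‖ := by congr 1; ring
                _ ≤ max ‖-(a * (p : ℤ_[p]) ^ i - u * (b * (p : ℤ_[p]) ^ j))‖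
                      ‖a * (p : ℤ_[p]) ^ i‖ := PadicInt.nonarchimedean _ _
                _ = _ := by rw [norm_neg]
            have h2 : max ‖a * (p : ℤ_[p]) ^ i - u * (b * (p : ℤ_[p]) ^ j)‖
                ‖a * (p : ℤ_[p]) ^ i‖ < (p : ℝ) ^ (-(j : ℤ)) := by
              refine max_lt (lt_of_le_of_lt h10 ?_) ?_
              · exact zpow_lt_zpow_right₀ hp1 (by omega)
              · rw [hna]; exact zpow_lt_zpow_right₀ hp1 (by omega)
            exact absurd (lt_of_le_of_lt h1 h2) (lt_irrefl _)
        subst hij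
        refine ⟨rfl, ?_⟩
        -- ‖a - u b‖ ≤ p^{-(m-i)}
        have hfac : a * (p : ℤ_[p]) ^ i - u * (b * (p : ℤ_[p]) ^ i)
            = (a - u * b) * (p : ℤ_[p]) ^ i := by ring
        rw [hfac, norm_mul, PadicInt.norm_p_pow] at h10
        have hppos : (0 : ℝ) < (p : ℝ) ^ (i : ℤ) := by positivity
        have haub : ‖a - u * b‖ ≤ (p : ℝ) ^ (-((m : ℤ) - (i : ℤ))) := by
          have h3 := mul_le_mul_of_nonneg_right h10 hppos.le
          rw [mul_assoc, ← zpow_add₀ (by positivity : (p:ℝ) ≠ 0), ← zpow_add₀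
            (by positivity : (p:ℝ) ≠ 0)] at h3
          simpa [neg_sub, sub_eq_neg_add] using h3
        have h2 : ‖(u - 1) * b‖ ≤ (p : ℝ) ^ (-((m : ℤ) - (i : ℤ))) := by
          rw [norm_mul]
          refine le_trans (mul_le_of_le_one_right (norm_nonneg _) (PadicInt.norm_le_one b)) ?_
          have : ‖u - 1‖ ≤ (p : ℝ) ^ (-(m : ℤ)) := by
            calc ‖u - 1‖ = ‖1 - u * 1‖ := by rw [← norm_neg]; congr 1; ring
            _ ≤ _ := h11
          exact le_trans this (zpow_le_zpow_right₀ hp1.le (by omega))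
        have key : a - b = (a - u * b) + (u - 1) * b := by ring
        rw [key]
        exact le_trans (PadicInt.nonarchimedean _ _) (max_le haub h2)

end Stmt1
end

section
/- Let z = x + iy ∈ ℍ with y ≥ √3/2, let p be an odd prime, λ ≥ 1 an integer with p^λ > 4, and A = [[a,b],[c,d]] ∈ M₂(ℤ) with det A = 1, A ≡ 1 mod p^λ, and u(Az, z) ≤ 1 where u denotes the standard hyperbolic distance function u(z₁,z₂) = |z₁−z₂|²/(4·Im z₁·Im z₂). Then c = 0, i.e. A is upper triangular. -/
set_option maxHeartbeats 1600000 in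
/-- Let `z = x + iy ∈ ℍ` with `y ≥ √3/2`, `p` an odd prime, `λ ≥ 1` with
`p^λ > 4`, and `A = [[a,b],[c,d]] ∈ M₂(ℤ)` with `det A = 1`, `A ≡ 1 mod p^λ`, and
`u(Az, z) ≤ 1`, where `u(z₁,z₂) = |z₁-z₂|²/(4 Im z₁ Im z₂)`. Then `c = 0`. -/
theorem congruence_matrix_upper_triangular
    (p : ℕ) (hp : p.Prime) (hodd : p ≠ 2) (l : ℕ) (hl : 1 ≤ l) (hpl : 4 < p ^ l)
    (x y : ℝ) (hy : Real.sqrt 3 / 2 ≤ y)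
    (A : Matrix (Fin 2) (Fin 2) ℤ) (hdet : A.det = 1)
    (hcong : ∀ i j, ((p : ℤ)) ^ l ∣ (A i j - (1 : Matrix (Fin 2) (Fin 2) ℤ) i j))
    (hu : ‖
          (((A 0 0 : ℂ) * (x + y * Complex.I) + (A 0 1 : ℂ)) /
              ((A 1 0 : ℂ) * (x + y * Complex.I) + (A 1 1 : ℂ)) -
            (x + y * Complex.I))‖ ^ 2 /
        (4 * (((A 0 0 : ℂ) * (x + y * Complex.I) + (A 0 1 : ℂ)) /
              ((A 1 0 : ℂ) * (x + y * Complex.I) + (A 1 1 : ℂ))).im * y) ≤ 1) :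
    A 1 0 = 0 := by
  by_contra hc
  have hs3 : Real.sqrt 3 ^ 2 = 3 := Real.sq_sqrt (by norm_num)
  have hs3' : (1:ℝ) ≤ Real.sqrt 3 := by
    nlinarith [Real.sqrt_nonneg 3]
  have hy0 : (0:ℝ) < y := by nlinarith
  have hy2 : (3:ℝ)/4 ≤ y ^ 2 := by nlinarith
  -- divisibility gives |c| ≥ 5
  have hdvd : (p:ℤ) ^ l ∣ A 1 0 := by
    have := hcong 1 0
    rwa [Matrix.one_apply_ne (by decide : (1:Fin 2) ≠ 0), sub_zero] at this
  have h5 : (5:ℤ) ≤ |A 1 0| := by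
    have h1 : (p:ℤ) ^ l ≤ |A 1 0| :=
      Int.le_of_dvd (abs_pos.mpr hc) ((dvd_abs _ _).mpr hdvd)
    have h2 : (5:ℕ) ≤ p ^ l := hpl
    have h3 : (5:ℤ) ≤ (p:ℤ) ^ l := by exact_mod_cast h2
    linarith
  have hc2 : (25:ℝ) ≤ (A 1 0 : ℝ) ^ 2 := by
    have : (25:ℤ) ≤ (A 1 0) ^ 2 := by nlinarith [sq_abs (A 1 0)]
    exact_mod_cast this
  -- real entries
  set aR := (A 0 0 : ℝ) with haR
  set bR := (A 0 1 : ℝ) with hbR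
  set cR := (A 1 0 : ℝ) with hcR
  set dR := (A 1 1 : ℝ) with hdR
  have hdetR : aR * dR - bR * cR = 1 := by
    rw [Matrix.det_fin_two] at hdet
    rw [haR, hbR, hcR, hdR]
    exact_mod_cast hdet
  set z : ℂ := (x:ℂ) + (y:ℂ) * Complex.I with hz
  have hzre : z.re = x := by simp [hz]
  have hzim : z.im = y := by simp [hz]
  set den : ℂ := (A 1 0 : ℂ) * z + (A 1 1 : ℂ) with hden
  have hdre : den.re = cR * x + dR := by simp [hden, hz, hcR, hdR]
  have hdim : den.im = cR * y := by simp [hden, hz, hcR, hdR]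
  set N : ℝ := (cR * x + dR) ^ 2 + (cR * y) ^ 2 with hN
  have hNsq : Complex.normSq den = N := by
    rw [Complex.normSq_apply, hdre, hdim, hN]; ring
  have hNge : 25 * (3/4) ≤ N := by
    have : (cR * y) ^ 2 = cR ^ 2 * y ^ 2 := by ring
    nlinarith [sq_nonneg (cR * x + dR)]
  have hN0 : (0:ℝ) < N := by nlinarith
  set num : ℂ := (A 0 0 : ℂ) * z + (A 0 1 : ℂ) with hnum
  have hnre : num.re = aR * x + bR := by simp [hnum, hz, haR, hbR]
  have hnim : num.im = aR * y := by simp [hnum, hz, haR, hbR]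
  have him : (num / den).im = y / N := by
    rw [Complex.div_im, hNsq, hnre, hnim, hdre, hdim]
    rw [div_sub_div_same, eq_div_iff (ne_of_gt hN0), div_mul_eq_mul_div,
      div_eq_iff (ne_of_gt hN0)]
    linear_combination y * N * hdetR
  -- bound from hu
  have habs : ‖num / den - z‖ ^ 2 ≤ 4 * (y / N) * y := by
    rw [him] at hu
    have hpos : (0:ℝ) < 4 * (y / N) * y := by positivity
    exact (div_le_one hpos).mp hu
  have himsq' : ∀ w : ℂ, w.im ^ 2 ≤ ‖w‖ ^ 2 := by
    intro w
    rw [Complex.sq_norm, Complex.normSq_apply]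
    nlinarith [sq_nonneg w.re]
  have himsq := himsq' (num / den - z)
  have hwim : (num / den - z).im = y / N - y := by
    rw [Complex.sub_im, him, hzim]
  rw [hwim] at himsq
  have key : (y / N - y) ^ 2 ≤ 4 * (y / N) * y := le_trans himsq habs
  -- contradiction: N ≥ 18.75 > 6
  have h1 : (y / N - y) ^ 2 = y ^ 2 * (1 - N) ^ 2 / N ^ 2 := by
    field_simp
  have h2 : 4 * (y / N) * y = 4 * y ^ 2 / N := by ring
  rw [h1, h2] at key
  have key2 : y ^ 2 * (1 - N) ^ 2 ≤ 4 * y ^ 2 * N := by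
    have hN2 : (0:ℝ) < N ^ 2 := by positivity
    rw [div_le_div_iff₀ hN2 hN0] at key
    nlinarith
  have hNN : (25:ℝ) * (3/4) * N ≤ N ^ 2 := by nlinarith
  have h3 : y ^ 2 * ((25:ℝ) * (3/4) * N) ≤ y ^ 2 * N ^ 2 :=
    mul_le_mul_of_nonneg_left hNN (sq_nonneg y)
  have h4 : (0:ℝ) < y ^ 2 * N := by positivity
  nlinarith [key2, h3, h4]
end
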